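/- Let ν be a nonzero finite nonnegative measure on [0,∞) with compact support and c > 0. For z < 0 (real, outside the support of the induced measure), suppose m(z) satisfies m(z) = (−z + c∫ t/(1 + t m(z)) dν(t))^{-1} with m(z) > 0. Then the map z ↦ m(z) is differentiable on its domain of definition in (−∞, 0) and m'(z) > 0. -/

import Mathlib

open MeasureTheory Filter Metric

section StieltjesAux

variable {ν : MeasureTheory.Measure ℝ} [IsFiniteMeasure ν] {R : ℝ}

private lemma stieltjes_aux_int_I (hae : ∀ᵐ t ∂ν, 0 ≤ t ∧ t ≤ R) {w : ℝ} (hw : 0 ≤ w) :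
    Integrable (fun t : ℝ => t / (1 + t * w)) ν := by
  refine Integrable.mono' (integrable_const (max R 0)) ?_ ?_
  · exact (measurable_id.div
      (measurable_const.add (measurable_id.mul_const w))).aestronglyMeasurable
  · filter_upwards [hae] with t ht
    obtain ⟨ht0, htR⟩ := ht
    have hpos : (0:ℝ) < 1 + t * w := by nlinarith
    have h1 : t / (1 + t * w) ≤ t := div_le_self ht0 (by nlinarith)
    have h2 : 0 ≤ t / (1 + t * w) := div_nonneg ht0 hpos.le
    rw [Real.norm_eq_abs, abs_of_nonneg h2]
    exact h1.trans (le_max_of_le_left htR)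

private lemma stieltjes_aux_int_K (hae : ∀ᵐ t ∂ν, 0 ≤ t ∧ t ≤ R) {w : ℝ} (hw : 0 ≤ w) :
    Integrable (fun t : ℝ => t * w / (1 + t * w)) ν := by
  refine Integrable.mono' (integrable_const 1) ?_ ?_
  · exact ((measurable_id.mul_const w).div
      (measurable_const.add (measurable_id.mul_const w))).aestronglyMeasurable
  · filter_upwards [hae] with t ht
    obtain ⟨ht0, htR⟩ := ht
    have hpos : (0:ℝ) < 1 + t * w := by nlinarith
    have h1 : t * w / (1 + t * w) ≤ 1 := by
      rw [div_le_one hpos]; linarith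
    have h2 : 0 ≤ t * w / (1 + t * w) := div_nonneg (by nlinarith) hpos.le
    rw [Real.norm_eq_abs, abs_of_nonneg h2]
    exact h1

private lemma stieltjes_aux_K_mono (hae : ∀ᵐ t ∂ν, 0 ≤ t ∧ t ≤ R) {w₁ w₂ : ℝ}
    (h1 : 0 ≤ w₁) (h12 : w₁ ≤ w₂) :
    ∫ t, t * w₁ / (1 + t * w₁) ∂ν ≤ ∫ t, t * w₂ / (1 + t * w₂) ∂ν := by
  refine integral_mono_ae (stieltjes_aux_int_K hae h1)
    (stieltjes_aux_int_K hae (h1.trans h12)) ?_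
  filter_upwards [hae] with t ht
  obtain ⟨ht0, htR⟩ := ht
  have hpos1 : (0:ℝ) < 1 + t * w₁ := by nlinarith
  have hpos2 : (0:ℝ) < 1 + t * w₂ := by nlinarith
  rw [div_le_div_iff₀ hpos1 hpos2]
  nlinarith

private lemma stieltjes_aux_hasDeriv (hae : ∀ᵐ t ∂ν, 0 ≤ t ∧ t ≤ R) {w₀ : ℝ} (hw₀ : 0 < w₀) :
    Integrable (fun t : ℝ => -(t * t) / (1 + t * w₀) ^ 2) ν ∧
    HasDerivAt (fun w => ∫ t, t / (1 + t * w) ∂ν)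
      (∫ t, -(t * t) / (1 + t * w₀) ^ 2 ∂ν) w₀ := by
  have hball : ∀ w ∈ ball w₀ (w₀ / 2), 0 < w := by
    intro w hw
    rw [mem_ball, Real.dist_eq, abs_lt] at hw
    linarith [hw.1]
  refine hasDerivAt_integral_of_dominated_loc_of_deriv_le (F := fun w t => t / (1 + t * w))
    (F' := fun w t => -(t * t) / (1 + t * w) ^ 2) (bound := fun _ => (max R 0) ^ 2)
    (ball_mem_nhds w₀ (half_pos hw₀)) ?_ ?_ ?_ ?_ ?_ ?_
  · exact Eventually.of_forall fun w =>
      (measurable_id.div (measurable_const.add (measurable_id.mul_const w))).aestronglyMeasurable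
  · exact stieltjes_aux_int_I hae hw₀.le
  · exact ((measurable_id.mul measurable_id).neg.div
      ((measurable_const.add (measurable_id.mul_const w₀)).pow_const 2)).aestronglyMeasurable
  · filter_upwards [hae] with t ht
    obtain ⟨ht0, htR⟩ := ht
    intro w hw
    have hwpos := hball w hw
    have hpos : (0:ℝ) < 1 + t * w := by nlinarith
    have h1 : ‖-(t * t) / (1 + t * w) ^ 2‖ = t * t / (1 + t * w) ^ 2 := by
      rw [Real.norm_eq_abs, abs_div, abs_neg, abs_of_nonneg (by nlinarith : (0:ℝ) ≤ t * t),
        abs_of_nonneg (by positivity : (0:ℝ) ≤ (1 + t * w) ^ 2)]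
    rw [h1]
    have h2 : t * t / (1 + t * w) ^ 2 ≤ t * t :=
      div_le_self (by nlinarith) (by nlinarith [sq_nonneg (t * w), mul_nonneg ht0 hwpos.le])
    have h3 : t * t ≤ (max R 0) ^ 2 := by
      have h4 : t ≤ max R 0 := le_max_of_le_left htR
      nlinarith [le_max_right R (0:ℝ)]
    linarith
  · exact integrable_const _
  · filter_upwards [hae] with t ht
    obtain ⟨ht0, htR⟩ := ht
    intro w hw
    have hwpos := hball w hw
    have hne : 1 + t * w ≠ 0 := by nlinarith
    have h5 := (hasDerivAt_const w t).div (((hasDerivAt_id w).const_mul t).const_add 1) hne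
    refine h5.congr_deriv ?_
    simp only [id_eq]
    ring

end StieltjesAux

/-- A Stieltjes-transform-type fixed point `m(z) = (−z + c ∫ t/(1 + t m(z)) dν(t))⁻¹`,
for a nonzero finite nonnegative measure `ν` supported on a compact subset of `[0,∞)`,
is differentiable in `z < 0` with positive derivative. -/
theorem stieltjes_fixed_point_deriv_pos
    (ν : Measure ℝ) [IsFiniteMeasure ν] (hν : ν ≠ 0)
    (hsupp0 : ν {t : ℝ | t < 0} = 0) (hsuppR : ∃ R : ℝ, ν {t : ℝ | R < t} = 0)
    (c : ℝ) (hc : 0 < c)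
    (m : ℝ → ℝ)
    (hm : ∀ z < (0 : ℝ), 0 < m z ∧
        m z = (-z + c * ∫ t, t / (1 + t * m z) ∂ν)⁻¹) :
    ∀ z < (0 : ℝ), DifferentiableAt ℝ m z ∧ 0 < deriv m z := by
  obtain ⟨R, hR⟩ := hsuppR
  have hae : ∀ᵐ t ∂ν, 0 ≤ t ∧ t ≤ R := by
    have h1 : ∀ᵐ t ∂ν, 0 ≤ t := by
      rw [ae_iff]
      convert hsupp0 using 2
      ext t; simp [not_le]
    have h2 : ∀ᵐ t ∂ν, t ≤ R := by
      rw [ae_iff]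
      convert hR using 2
      ext t; simp [not_le]
    exact h1.and h2
  -- rearranged fixed-point equation
  have hinv : ∀ z, z < 0 → (m z)⁻¹ = -z + c * ∫ t, t / (1 + t * m z) ∂ν := by
    intro z hz
    obtain ⟨hp, he⟩ := hm z hz
    have hAne : (-z + c * ∫ t, t / (1 + t * m z) ∂ν) ≠ 0 := by
      intro h0
      rw [h0] at he
      simp at he
      exact absurd he (ne_of_gt hp)
    conv_lhs => rw [he]
    rw [inv_inv]
  -- K w = w * I w
  have hK : ∀ w : ℝ, ∫ t, t * w / (1 + t * w) ∂ν = w * ∫ t, t / (1 + t * w) ∂ν := by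
    intro w
    have h : (fun t : ℝ => t * w / (1 + t * w)) = fun t => w * (t / (1 + t * w)) := by
      funext t; ring
    rw [h, integral_const_mul]
  set Φ : ℝ → ℝ → ℝ := fun z w => -z * w + c * (∫ t, t * w / (1 + t * w) ∂ν) - 1 with hΦdef
  have hΦmono : ∀ z ≤ (0:ℝ), ∀ w₁ w₂ : ℝ, 0 ≤ w₁ → w₁ ≤ w₂ → Φ z w₁ ≤ Φ z w₂ := by
    intro z hz w₁ w₂ h1 h12
    have hKm := stieltjes_aux_K_mono hae h1 h12
    simp only [hΦdef]
    nlinarith [mul_nonneg (neg_nonneg.mpr hz) (sub_nonneg.mpr h12),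
      mul_le_mul_of_nonneg_left hKm hc.le]
  have hΦstrict : ∀ z < (0:ℝ), ∀ w₁ w₂ : ℝ, 0 ≤ w₁ → w₁ < w₂ → Φ z w₁ < Φ z w₂ := by
    intro z hz w₁ w₂ h1 h12
    have hKm := stieltjes_aux_K_mono hae h1 h12.le
    simp only [hΦdef]
    nlinarith [mul_pos (neg_pos.mpr hz) (sub_pos.mpr h12),
      mul_le_mul_of_nonneg_left hKm hc.le]
  have hΦroot : ∀ z < (0:ℝ), Φ z (m z) = 0 := by
    intro z hz
    have hp := (hm z hz).1
    have hi := hinv z hz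
    simp only [hΦdef]
    rw [hK (m z)]
    have h : -z * m z + c * (m z * ∫ t, t / (1 + t * m z) ∂ν) - 1
        = m z * (-z + c * ∫ t, t / (1 + t * m z) ∂ν) - 1 := by ring
    rw [h, ← hi, mul_inv_cancel₀ (ne_of_gt hp), sub_self]
  intro z₀ hz₀
  obtain ⟨hw₀pos, hw₀eq⟩ := hm z₀ hz₀
  -- continuity of m at z₀
  have hcont : ContinuousAt m z₀ := by
    rw [ContinuousAt, Metric.tendsto_nhds]
    intro ε hε
    set ε' : ℝ := min ε (m z₀) / 2 with hε'def
    have hε'pos : 0 < ε' := half_pos (lt_min hε hw₀pos)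
    have hε'lt : ε' < ε := by
      have h := min_le_left ε (m z₀); rw [hε'def]; linarith
    have hε'w : ε' < m z₀ := by
      have h := min_le_right ε (m z₀); rw [hε'def]; linarith
    have hval : Φ z₀ (m z₀) = 0 := hΦroot z₀ hz₀
    have hlow : Φ z₀ (m z₀ - ε') < 0 := by
      have h := hΦstrict z₀ hz₀ (m z₀ - ε') (m z₀) (by linarith) (by linarith)
      linarith
    have hhigh : 0 < Φ z₀ (m z₀ + ε') := by
      have h := hΦstrict z₀ hz₀ (m z₀) (m z₀ + ε') hw₀pos.le (by linarith)
      linarith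
    have hcz : ∀ w : ℝ, Continuous (fun z => Φ z w) := by
      intro w
      simp only [hΦdef]
      fun_prop
    have hA : ∀ᶠ z in nhds z₀, Φ z (m z₀ - ε') < 0 :=
      ((hcz _).tendsto z₀).eventually_lt_const hlow
    have hB : ∀ᶠ z in nhds z₀, 0 < Φ z (m z₀ + ε') :=
      ((hcz _).tendsto z₀).eventually_const_lt hhigh
    have hC : ∀ᶠ z in nhds z₀, z < 0 :=
      Filter.eventually_of_mem (Iio_mem_nhds hz₀) fun z hz => hz
    filter_upwards [hA, hB, hC] with z h1 h2 h3
    have hroot := hΦroot z h3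
    have hpz := (hm z h3).1
    have hlo : m z₀ - ε' < m z := by
      by_contra h
      push_neg at h
      have := hΦmono z h3.le (m z) (m z₀ - ε') hpz.le h
      linarith
    have hhi : m z < m z₀ + ε' := by
      by_contra h
      push_neg at h
      have := hΦmono z h3.le (m z₀ + ε') (m z) (by linarith) h
      linarith
    rw [Real.dist_eq, abs_lt]
    constructor <;> linarith
  -- derivative of ψ
  obtain ⟨hJint, hJderiv⟩ := stieltjes_aux_hasDeriv hae hw₀pos
  set E : ℝ := ∫ t, -(t * t) / (1 + t * m z₀) ^ 2 ∂ν with hEdef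
  set D : ℝ := ((m z₀) ^ 2)⁻¹ + c * E with hDdef
  have hψ : HasDerivAt (fun w => -w⁻¹ + c * ∫ t, t / (1 + t * w) ∂ν) D (m z₀) := by
    have h1 : HasDerivAt (fun w : ℝ => -w⁻¹) (((m z₀) ^ 2)⁻¹) (m z₀) := by
      have h := (hasDerivAt_inv (ne_of_gt hw₀pos)).neg
      rw [neg_neg] at h
      exact h
    exact h1.add (hJderiv.const_mul c)
  -- positivity of D
  have hI0 : c * ∫ t, t / (1 + t * m z₀) ∂ν = (m z₀)⁻¹ + z₀ := by
    have h := hinv z₀ hz₀; linarith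
  have hEeq : E = - ∫ t, t * t / (1 + t * m z₀) ^ 2 ∂ν := by
    rw [hEdef, show (fun t : ℝ => -(t * t) / (1 + t * m z₀) ^ 2)
      = fun t => -(t * t / (1 + t * m z₀) ^ 2) from funext fun t => by ring, integral_neg]
  have hJle : ∫ t, t * t / (1 + t * m z₀) ^ 2 ∂ν
      ≤ (∫ t, t / (1 + t * m z₀) ∂ν) * (m z₀)⁻¹ := by
    rw [← integral_mul_const]
    refine integral_mono_ae ?_ ((stieltjes_aux_int_I hae hw₀pos.le).mul_const _) ?_
    · have h : (fun t : ℝ => t * t / (1 + t * m z₀) ^ 2)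
          = fun t : ℝ => -(-(t * t) / (1 + t * m z₀) ^ 2) := funext fun t => by ring
      rw [h]
      exact hJint.neg
    · filter_upwards [hae] with t ht
      obtain ⟨ht0, htR⟩ := ht
      have hpos : (0:ℝ) < 1 + t * m z₀ := by nlinarith
      have hle : t / (1 + t * m z₀) ≤ (m z₀)⁻¹ := by
        rw [div_le_iff₀ hpos]
        have h : (m z₀)⁻¹ * (1 + t * m z₀) = (m z₀)⁻¹ + t := by
          field_simp
        rw [h]
        have h2 : 0 ≤ (m z₀)⁻¹ := by positivity
        linarith
      have heq : t * t / (1 + t * m z₀) ^ 2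
          = (t / (1 + t * m z₀)) * (t / (1 + t * m z₀)) := by
        rw [pow_two, div_mul_div_comm]
      rw [heq]
      exact mul_le_mul_of_nonneg_left hle (div_nonneg ht0 hpos.le)
  have hDpos : 0 < D := by
    rw [hDdef, hEeq]
    have hinvpos : 0 < (m z₀)⁻¹ := inv_pos.mpr hw₀pos
    have hsq : ((m z₀) ^ 2)⁻¹ = (m z₀)⁻¹ * (m z₀)⁻¹ := by
      rw [sq, mul_inv]
    have h1 : c * (∫ t, t * t / (1 + t * m z₀) ^ 2 ∂ν)
        ≤ c * ((∫ t, t / (1 + t * m z₀) ∂ν) * (m z₀)⁻¹) :=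
      mul_le_mul_of_nonneg_left hJle hc.le
    have h2 : c * ((∫ t, t / (1 + t * m z₀) ∂ν) * (m z₀)⁻¹)
        = ((m z₀)⁻¹ + z₀) * (m z₀)⁻¹ := by
      rw [← mul_assoc, hI0]
    have h3 : ((m z₀)⁻¹ + z₀) * (m z₀)⁻¹ = (m z₀)⁻¹ * (m z₀)⁻¹ + z₀ * (m z₀)⁻¹ := by ring
    have h4 : z₀ * (m z₀)⁻¹ < 0 := mul_neg_of_neg_of_pos hz₀ hinvpos
    have h5 : c * (-(∫ t, t * t / (1 + t * m z₀) ^ 2 ∂ν))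
        = -(c * ∫ t, t * t / (1 + t * m z₀) ^ 2 ∂ν) := by ring
    rw [hsq, h5]
    linarith
  -- local left inverse
  have hev : ∀ᶠ z in nhds z₀,
      (fun w => -w⁻¹ + c * ∫ t, t / (1 + t * w) ∂ν) (m z) = z := by
    filter_upwards [Filter.eventually_of_mem (Iio_mem_nhds hz₀) fun z hz => hz] with z hz
    have h := hinv z hz
    linarith
  have hm' : HasDerivAt m D⁻¹ z₀ :=
    HasDerivAt.of_local_left_inverse hcont hψ (ne_of_gt hDpos) hev
  exact ⟨hm'.differentiableAt, by rw [hm'.deriv]; exact inv_pos.mpr hDpos⟩
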